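/- With the anisotropic distance d*(Δ, α, δ) = √(Δᵀ Rᵀ(α) S(δ)² R(α) Δ), one has d*(Δ, α + π/2, 1/δ) = d*(Δ, α, δ) for all Δ ∈ ℝ², α ∈ ℝ, δ > 0. Hence the anisotropic Matérn parametrization is not identifiable: (α, δ) and (α + π/2, 1/δ) yield identical correlations. -/
import Mathlib


open Real Matrix

/-- The anisotropic distance `d*(Δ, α, δ)` is unchanged under `(α, δ) ↦ (α + π/2, 1/δ)`, so the parametrization is not identifiable. -/
theorem stmt4
    (R : ℝ → Matrix (Fin 2) (Fin 2) ℝ)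
    (hR : ∀ α : ℝ, R α = !![Real.cos α, Real.sin α; -Real.sin α, Real.cos α])
    (S2 : ℝ → Matrix (Fin 2) (Fin 2) ℝ)
    (hS2 : ∀ δ : ℝ, S2 δ = !![δ, 0; 0, 1/δ])
    (dstar : (Fin 2 → ℝ) → ℝ → ℝ → ℝ)
    (hdstar : ∀ (Δ : Fin 2 → ℝ) (α δ : ℝ),
      dstar Δ α δ = Real.sqrt (Δ ⬝ᵥ ((R α)ᵀ * S2 δ * R α).mulVec Δ))
    (Δ : Fin 2 → ℝ) (α δ : ℝ) (hδ : 0 < δ) :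
    dstar Δ (α + Real.pi / 2) (1/δ) = dstar Δ α δ := by
  have key : ((R (α + Real.pi/2))ᵀ * S2 (1/δ) * R (α + Real.pi/2)) = ((R α)ᵀ * S2 δ * R α) := by
    rw [hR, hR, hS2, hS2, Real.cos_add_pi_div_two, Real.sin_add_pi_div_two]
    have hd : (1:ℝ)/(1/δ) = δ := by field_simp
    rw [hd]
    ext i j
    fin_cases i <;> fin_cases j <;>
      simp [Matrix.mul_apply, Fin.sum_univ_two, Matrix.transpose_apply, Matrix.vecHead, Matrix.vecTail] <;> ring
  rw [hdstar, hdstar, key]
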